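/- The class of 1-counter languages is not closed under concatenation: the language C = { a^n b^n : n ∈ ℕ } over {a, b} is 1-counter, but the concatenation C·C = { a^m b^m a^n b^n : m, n ∈ ℕ } is not 1-counter. -/

import Mathlib

/-- A `ℤ^k`-automaton over alphabet `A`: a finite directed graph with states
`Fin n`, a start state, accept states, and finitely many edges labelled by
pairs `(x, g)` with `x ∈ A ∪ {ε}` (modelled as `Option A`) and `g ∈ ℤ^k`. -/
structure ZkAut (A : Type) (k : ℕ) where
  n : ℕ
  start : Fin n
  accept : Fin n → Prop
  edges : List (Fin n × (Option A × (Fin k → ℤ)) × Fin n)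

/-- `M.Path p q w g` : there is a directed path from `p` to `q` whose edge
labels read the word `w` and sum to `g` in `ℤ^k`. -/
inductive ZkAut.Path {A : Type} {k : ℕ} (M : ZkAut A k) :
    Fin M.n → Fin M.n → List A → (Fin k → ℤ) → Prop
  | nil (q : Fin M.n) : ZkAut.Path M q q [] 0
  | cons {p q r : Fin M.n} {x : Option A} {g : Fin k → ℤ} {w : List A} {h : Fin k → ℤ} :
      (p, (x, g), q) ∈ M.edges → ZkAut.Path M q r w h →
      ZkAut.Path M p r (x.toList ++ w) (g + h)

/-- The automaton accepts `w` if some path from the start state to an accept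
state reads `w` with total counter value `0 ∈ ℤ^k`. -/
def ZkAut.Accepts {A : Type} {k : ℕ} (M : ZkAut A k) (w : List A) : Prop :=
  ∃ q : Fin M.n, M.accept q ∧ M.Path M.start q w 0

/-- A language is `k`-counter if it is the set of words accepted by some
`ℤ^k`-automaton. -/
def IsCounterLang {A : Type} (k : ℕ) (L : Language A) : Prop :=
  ∃ M : ZkAut A k, ∀ w : List A, w ∈ L ↔ M.Accepts w

namespace OCNC

abbrev Edge {A : Type} (M : ZkAut A 1) := Fin M.n × (Option A × (Fin 1 → ℤ)) × Fin M.n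

variable {A : Type} {M : ZkAut A 1}

/-- end state of a trace started at `p` -/
def endSt : Fin M.n → List (Edge M) → Fin M.n
  | p, [] => p
  | _, e :: T => endSt e.2.2 T

/-- a list of edges is a legal trace from `p` -/
def Ok : Fin M.n → List (Edge M) → Prop
  | _, [] => True
  | p, e :: T => e ∈ M.edges ∧ e.1 = p ∧ Ok e.2.2 T

/-- word read by a trace -/
def wd : List (Edge M) → List A
  | [] => []
  | e :: T => e.2.1.1.toList ++ wd T

/-- total weight of a trace -/
def wt : List (Edge M) → ℤ
  | [] => 0
  | e :: T => e.2.1.2 0 + wt T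

@[simp] lemma endSt_nil (p : Fin M.n) : endSt p ([] : List (Edge M)) = p := rfl
@[simp] lemma endSt_cons (p : Fin M.n) (e : Edge M) (T : List (Edge M)) :
    endSt p (e :: T) = endSt e.2.2 T := rfl
@[simp] lemma Ok_nil (p : Fin M.n) : Ok p ([] : List (Edge M)) := trivial
@[simp] lemma Ok_cons (p : Fin M.n) (e : Edge M) (T : List (Edge M)) :
    Ok p (e :: T) ↔ e ∈ M.edges ∧ e.1 = p ∧ Ok e.2.2 T := Iff.rfl
@[simp] lemma wd_nil : wd ([] : List (Edge M)) = [] := rfl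
@[simp] lemma wd_cons (e : Edge M) (T : List (Edge M)) :
    wd (e :: T) = e.2.1.1.toList ++ wd T := rfl
@[simp] lemma wt_nil : wt ([] : List (Edge M)) = 0 := rfl
@[simp] lemma wt_cons (e : Edge M) (T : List (Edge M)) :
    wt (e :: T) = e.2.1.2 0 + wt T := rfl

@[simp] lemma endSt_append (p : Fin M.n) (T1 T2 : List (Edge M)) :
    endSt p (T1 ++ T2) = endSt (endSt p T1) T2 := by
  induction T1 generalizing p with
  | nil => rfl
  | cons e T ih => simp [ih]

@[simp] lemma Ok_append (p : Fin M.n) (T1 T2 : List (Edge M)) :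
    Ok p (T1 ++ T2) ↔ Ok p T1 ∧ Ok (endSt p T1) T2 := by
  induction T1 generalizing p with
  | nil => simp
  | cons e T ih => simp [ih, and_assoc]

@[simp] lemma wd_append (T1 T2 : List (Edge M)) : wd (T1 ++ T2) = wd T1 ++ wd T2 := by
  induction T1 with
  | nil => rfl
  | cons e T ih => simp [ih]

@[simp] lemma wt_append (T1 T2 : List (Edge M)) : wt (T1 ++ T2) = wt T1 + wt T2 := by
  induction T1 with
  | nil => simp
  | cons e T ih => simp [ih]; ring

lemma path_of_tr : ∀ (T : List (Edge M)) (p : Fin M.n), Ok p T →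
    M.Path p (endSt p T) (wd T) (fun _ => wt T) := by
  intro T
  induction T with
  | nil =>
    intro p _
    have : (fun _ : Fin 1 => (0:ℤ)) = (0 : Fin 1 → ℤ) := rfl
    simpa [this] using ZkAut.Path.nil (M := M) p
  | cons e T ih =>
    rintro p ⟨he, hsrc, hok⟩
    have h2 := ih e.2.2 hok
    have heq : (fun _ : Fin 1 => e.2.1.2 0 + wt T) = e.2.1.2 + (fun _ => wt T) := by
      funext i
      have : i = 0 := Subsingleton.elim _ _
      simp [this, Pi.add_apply]
    have hpath := ZkAut.Path.cons (M := M) (p := p) (q := e.2.2) (r := endSt e.2.2 T)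
      (x := e.2.1.1) (g := e.2.1.2) (w := wd T) (h := fun _ => wt T) ?_ h2
    · simpa [heq] using hpath
    · have : e = (p, (e.2.1.1, e.2.1.2), e.2.2) := by
        rcases e with ⟨a, ⟨b, c⟩, d⟩
        simp at hsrc ⊢
        exact hsrc
      rwa [this] at he

lemma tr_of_path {p q : Fin M.n} {w : List A} {g : Fin 1 → ℤ} (h : M.Path p q w g) :
    ∃ T : List (Edge M), Ok p T ∧ endSt p T = q ∧ wd T = w ∧ wt T = g 0 := by
  induction h with
  | nil q => exact ⟨[], trivial, rfl, rfl, rfl⟩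
  | @cons p q r x g w h he _ ih =>
    obtain ⟨T, hok, hend, hwd, hwt⟩ := ih
    refine ⟨(p, (x, g), q) :: T, ⟨he, rfl, hok⟩, by simpa using hend, by simp [hwd], ?_⟩
    simp [hwt, Pi.add_apply]

lemma accepts_iff_tr (w : List A) :
    M.Accepts w ↔ ∃ (f : Fin M.n) (T : List (Edge M)),
      M.accept f ∧ Ok M.start T ∧ endSt M.start T = f ∧ wd T = w ∧ wt T = 0 := by
  constructor
  · rintro ⟨q, hq, hp⟩
    obtain ⟨T, hok, hend, hwd, hwt⟩ := tr_of_path hp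
    exact ⟨q, T, hq, hok, hend, hwd, by simpa using hwt⟩
  · rintro ⟨f, T, hf, hok, hend, hwd, hwt⟩
    refine ⟨f, hf, ?_⟩
    have := path_of_tr T M.start hok
    rw [hend, hwd, hwt] at this
    have h0 : (fun _ : Fin 1 => (0:ℤ)) = (0 : Fin 1 → ℤ) := rfl
    rwa [h0] at this

/-! ### Part 1 : `C` is 1-counter -/

section Part1

abbrev M1 : ZkAut (Fin 2) 1 where
  n := 2
  start := 0
  accept := fun q => q = 1
  edges := [((0 : Fin 2), ((some (0 : Fin 2)), fun _ => (1:ℤ)), (0 : Fin 2)),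
            ((0 : Fin 2), (none, fun _ => (0:ℤ)), (1 : Fin 2)),
            ((1 : Fin 2), ((some (1 : Fin 2)), fun _ => (-1:ℤ)), (1 : Fin 2))]

def eA : Edge M1 := ((0 : Fin 2), ((some (0 : Fin 2)), fun _ => (1:ℤ)), (0 : Fin 2))
def eM : Edge M1 := ((0 : Fin 2), (none, fun _ => (0:ℤ)), (1 : Fin 2))
def eB : Edge M1 := ((1 : Fin 2), ((some (1 : Fin 2)), fun _ => (-1:ℤ)), (1 : Fin 2))

@[simp] lemma eA_lbl : eA.2.1.1 = some (0 : Fin 2) := rfl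
@[simp] lemma eA_wt : eA.2.1.2 0 = 1 := rfl
@[simp] lemma eA_dst : eA.2.2 = (0 : Fin 2) := rfl
@[simp] lemma eM_lbl : eM.2.1.1 = (none : Option (Fin 2)) := rfl
@[simp] lemma eM_wt : eM.2.1.2 0 = 0 := rfl
@[simp] lemma eM_dst : eM.2.2 = (1 : Fin 2) := rfl
@[simp] lemma eB_lbl : eB.2.1.1 = some (1 : Fin 2) := rfl
@[simp] lemma eB_wt : eB.2.1.2 0 = -1 := rfl
@[simp] lemma eB_dst : eB.2.2 = (1 : Fin 2) := rfl

lemma memcase {e : Edge M1} (he : e ∈ M1.edges) : e = eA ∨ e = eM ∨ e = eB := by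
  simpa [M1, eA, eM, eB] using he

lemma repA (n : ℕ) : Ok (M := M1) 0 (List.replicate n eA) ∧
    endSt (M := M1) 0 (List.replicate n eA) = 0 ∧
    wd (List.replicate n eA) = List.replicate n (0 : Fin 2) ∧
    wt (List.replicate n eA) = n := by
  induction n with
  | zero => exact ⟨trivial, rfl, rfl, rfl⟩
  | succ k ih =>
    obtain ⟨h1, h2, h3, h4⟩ := ih
    refine ⟨⟨by simp [M1, eA], rfl, by simpa using h1⟩, by simpa [List.replicate_succ] using h2, ?_, ?_⟩
    · simp [List.replicate_succ, h3]
    · simp [List.replicate_succ, h4]; try push_cast; try ring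

lemma repB (n : ℕ) : Ok (M := M1) 1 (List.replicate n eB) ∧
    endSt (M := M1) 1 (List.replicate n eB) = 1 ∧
    wd (List.replicate n eB) = List.replicate n (1 : Fin 2) ∧
    wt (List.replicate n eB) = -n := by
  induction n with
  | zero => exact ⟨trivial, rfl, rfl, rfl⟩
  | succ k ih =>
    obtain ⟨h1, h2, h3, h4⟩ := ih
    refine ⟨⟨by simp [M1, eB], rfl, by simpa using h1⟩, by simpa [List.replicate_succ] using h2, ?_, ?_⟩
    · simp [List.replicate_succ, h3]
    · simp [List.replicate_succ, h4]; try push_cast; try ring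

lemma fromB (T : List (Edge M1)) : Ok (M := M1) 1 T →
    ∃ k : ℕ, endSt (M := M1) 1 T = 1 ∧ wd T = List.replicate k (1 : Fin 2) ∧ wt T = -k := by
  induction T with
  | nil => exact fun _ => ⟨0, rfl, rfl, rfl⟩
  | cons e T ih =>
    rintro ⟨he, hsrc, hok⟩
    rcases memcase he with rfl | rfl | rfl
    · exact absurd hsrc (by simp [eA])
    · exact absurd hsrc (by simp [eM])
    · obtain ⟨k, h1, h2, h3⟩ := ih (by simpa using hok)
      exact ⟨k + 1, by simpa using h1, by simp [h2, List.replicate_succ], by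
        simp [h3]; try push_cast; try ring⟩

lemma fromA (T : List (Edge M1)) : Ok (M := M1) 0 T →
    (∃ m : ℕ, endSt (M := M1) 0 T = 0 ∧ wd T = List.replicate m (0 : Fin 2) ∧ wt T = m) ∨
    (∃ m k : ℕ, endSt (M := M1) 0 T = 1 ∧
      wd T = List.replicate m (0 : Fin 2) ++ List.replicate k (1 : Fin 2) ∧ wt T = m - k) := by
  induction T with
  | nil => exact fun _ => Or.inl ⟨0, rfl, rfl, rfl⟩
  | cons e T ih =>
    rintro ⟨he, hsrc, hok⟩
    rcases memcase he with rfl | rfl | rfl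
    · rcases ih (by simpa using hok) with ⟨m, h1, h2, h3⟩ | ⟨m, k, h1, h2, h3⟩
      · exact Or.inl ⟨m + 1, by simpa using h1,
          by simp [h2, List.replicate_succ], by simp [h3]; try push_cast; try ring⟩
      · exact Or.inr ⟨m + 1, k, by simpa using h1,
          by simp [h2, List.replicate_succ], by simp [h3]; try push_cast; try ring⟩
    · obtain ⟨k, h1, h2, h3⟩ := fromB T (by simpa using hok)
      exact Or.inr ⟨0, k, by simpa using h1, by simpa using h2, by simp [h3]⟩
    · exact absurd hsrc (by simp [eB])

lemma part1 : IsCounterLang 1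
    ({w | ∃ n : ℕ, w = List.replicate n 0 ++ List.replicate n 1} : Language (Fin 2)) := by
  refine ⟨M1, fun w => ?_⟩
  rw [accepts_iff_tr]
  constructor
  · rintro ⟨n, rfl⟩
    obtain ⟨ha1, ha2, ha3, ha4⟩ := repA n
    obtain ⟨hb1, hb2, hb3, hb4⟩ := repB n
    refine ⟨1, List.replicate n eA ++ eM :: List.replicate n eB, rfl, ?_, ?_, ?_, ?_⟩
    · simp only [Ok_append, ha1, ha2, true_and, Ok_cons]
      exact ⟨by simp [M1, eM], rfl, by simpa [eM] using hb1⟩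
    · simp [ha2, eM, hb2]
    · simp [ha3, eM, hb3]
    · simp [ha4, eM, hb4]
  · rintro ⟨f, T, hf, hok, hend, hwd, hwt⟩
    rcases fromA T hok with ⟨m, h1, _, _⟩ | ⟨m, k, _, h2, h3⟩
    · rw [hend] at h1; rw [h1] at hf
      exact absurd hf (by simp [M1])
    · have : (m : ℤ) = k := by rw [hwt] at h3; linarith
      have hmk : m = k := by exact_mod_cast this
      exact ⟨m, by rw [← hwd, h2, hmk]⟩

end Part1

/-! ### Part 2 : `C * C` is not 1-counter -/

section Part2

open List

def CL : Language (Fin 2) := {w | ∃ n : ℕ, w = List.replicate n 0 ++ List.replicate n 1}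

def quad (a b c d : ℕ) : List (Fin 2) :=
  List.replicate a 0 ++ List.replicate b 1 ++ List.replicate c 0 ++ List.replicate d 1

/-- four-fold run-length parse -/
def tw0 (w : List (Fin 2)) : List (Fin 2) := w.takeWhile (· == (0 : Fin 2))
def dw0 (w : List (Fin 2)) : List (Fin 2) := w.dropWhile (· == (0 : Fin 2))
def tw1 (w : List (Fin 2)) : List (Fin 2) := w.takeWhile (· == (1 : Fin 2))
def dw1 (w : List (Fin 2)) : List (Fin 2) := w.dropWhile (· == (1 : Fin 2))

def prs (w : List (Fin 2)) : ℕ × ℕ × ℕ × ℕ × List (Fin 2) :=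
  ((tw0 w).length, (tw1 (dw0 w)).length, (tw0 (dw1 (dw0 w))).length,
    (tw1 (dw0 (dw1 (dw0 w)))).length, dw1 (dw0 (dw1 (dw0 w))))

@[simp] lemma tw0_rep0 (k : ℕ) (l : List (Fin 2)) :
    tw0 (List.replicate k 0 ++ l) = List.replicate k 0 ++ tw0 l := by
  induction k with
  | zero => simp [tw0]
  | succ m ih => simpa [tw0, List.replicate_succ, List.takeWhile_cons] using ih

@[simp] lemma dw0_rep0 (k : ℕ) (l : List (Fin 2)) :
    dw0 (List.replicate k 0 ++ l) = dw0 l := by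
  induction k with
  | zero => simp [dw0]
  | succ m ih => simpa [dw0, List.replicate_succ, List.dropWhile_cons] using ih

@[simp] lemma tw1_rep1 (k : ℕ) (l : List (Fin 2)) :
    tw1 (List.replicate k 1 ++ l) = List.replicate k 1 ++ tw1 l := by
  induction k with
  | zero => simp [tw1]
  | succ m ih => simpa [tw1, List.replicate_succ, List.takeWhile_cons] using ih

@[simp] lemma dw1_rep1 (k : ℕ) (l : List (Fin 2)) :
    dw1 (List.replicate k 1 ++ l) = dw1 l := by
  induction k with
  | zero => simp [dw1]
  | succ m ih => simpa [dw1, List.replicate_succ, List.dropWhile_cons] using ih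

@[simp] lemma tw0_one (l : List (Fin 2)) : tw0 (1 :: l) = [] := by
  simp [tw0, List.takeWhile_cons]
@[simp] lemma dw0_one (l : List (Fin 2)) : dw0 (1 :: l) = 1 :: l := by
  simp [dw0, List.dropWhile_cons]
@[simp] lemma tw1_zero (l : List (Fin 2)) : tw1 (0 :: l) = [] := by
  simp [tw1, List.takeWhile_cons]
@[simp] lemma dw1_zero (l : List (Fin 2)) : dw1 (0 :: l) = 0 :: l := by
  simp [dw1, List.dropWhile_cons]
@[simp] lemma tw0_nil : tw0 [] = [] := rfl
@[simp] lemma dw0_nil : dw0 [] = [] := rfl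
@[simp] lemma tw1_nil : tw1 [] = [] := rfl
@[simp] lemma dw1_nil : dw1 [] = [] := rfl

lemma tw0_rep1 (k : ℕ) : tw0 (List.replicate k 1) = [] := by
  cases k with
  | zero => rfl
  | succ m => rw [List.replicate_succ]; exact tw0_one _
lemma dw0_rep1 (k : ℕ) : dw0 (List.replicate k 1) = List.replicate k 1 := by
  cases k with
  | zero => rfl
  | succ m => rw [List.replicate_succ]; exact dw0_one _
lemma tw1_rep0 (k : ℕ) : tw1 (List.replicate k 0) = [] := by
  cases k with
  | zero => rfl
  | succ m => rw [List.replicate_succ]; exact tw1_zero _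
lemma dw1_rep0 (k : ℕ) : dw1 (List.replicate k 0) = List.replicate k 0 := by
  cases k with
  | zero => rfl
  | succ m => rw [List.replicate_succ]; exact dw1_zero _

lemma prs_quad {a b c d : ℕ} (hb : 1 ≤ b) (hc : 1 ≤ c) :
    prs (quad a b c d) = (a, b, c, d, []) := by
  obtain ⟨b, rfl⟩ : ∃ b', b = b' + 1 := ⟨b - 1, by omega⟩
  obtain ⟨c, rfl⟩ : ∃ c', c = c' + 1 := ⟨c - 1, by omega⟩
  have h1 : dw0 (quad a (b+1) (c+1) d) =
      List.replicate (b+1) 1 ++ (List.replicate (c+1) 0 ++ List.replicate d 1) := by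
    simp [quad, List.append_assoc, List.replicate_succ]
  have h2 : dw1 (dw0 (quad a (b+1) (c+1) d)) = List.replicate (c+1) 0 ++ List.replicate d 1 := by
    rw [h1, dw1_rep1]; rw [List.replicate_succ]; exact dw1_zero _
  have h3 : dw0 (dw1 (dw0 (quad a (b+1) (c+1) d))) = List.replicate d 1 := by
    rw [h2, dw0_rep0, dw0_rep1]
  have t0 : (tw0 (quad a (b+1) (c+1) d)).length = a := by
    have : tw0 (quad a (b+1) (c+1) d) = List.replicate a 0 := by
      simp only [quad, List.append_assoc, tw0_rep0]
      rw [List.replicate_succ]; simp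
    simp [this]
  have t1 : (tw1 (dw0 (quad a (b+1) (c+1) d))).length = b + 1 := by
    rw [h1, tw1_rep1]
    have hz : tw1 (List.replicate (c+1) (0:Fin 2) ++ List.replicate d 1) = [] := by
      rw [List.replicate_succ, List.cons_append]; exact tw1_zero _
    simp [hz]
  have t2 : (tw0 (dw1 (dw0 (quad a (b+1) (c+1) d)))).length = c + 1 := by
    rw [h2, tw0_rep0, tw0_rep1]
    simp
  have t3 : (tw1 (dw0 (dw1 (dw0 (quad a (b+1) (c+1) d))))).length = d := by
    rw [h3]
    have h4 : tw1 (List.replicate d (1:Fin 2)) = List.replicate d 1 := by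
      have := tw1_rep1 d ([] : List (Fin 2)); simpa using this
    simp [h4]
  have t4 : dw1 (dw0 (dw1 (dw0 (quad a (b+1) (c+1) d)))) = [] := by
    rw [h3]
    have := dw1_rep1 d ([] : List (Fin 2))
    simpa using this
  simp [prs, t0, t1, t2, t3, t4]

lemma prs_pair (a b : ℕ) :
    prs (List.replicate a 0 ++ List.replicate b 1) = (a, b, 0, 0, []) := by
  have h1 : dw0 (List.replicate a (0:Fin 2) ++ List.replicate b 1) = List.replicate b 1 := by
    rw [dw0_rep0, dw0_rep1]
  have t0 : (tw0 (List.replicate a (0:Fin 2) ++ List.replicate b 1)).length = a := by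
    rw [tw0_rep0, tw0_rep1]; simp
  have t1 : (tw1 (dw0 (List.replicate a (0:Fin 2) ++ List.replicate b 1))).length = b := by
    rw [h1]
    have := tw1_rep1 b ([] : List (Fin 2))
    simp at this
    simp [this]
  have h2 : dw1 (dw0 (List.replicate a (0:Fin 2) ++ List.replicate b 1)) = [] := by
    rw [h1]
    have := dw1_rep1 b ([] : List (Fin 2))
    simpa using this
  have e1 : tw0 (List.replicate b (1:Fin 2)) = [] := tw0_rep1 b
  have e2 : tw1 (List.replicate b (1:Fin 2)) = List.replicate b 1 := by
    have := tw1_rep1 b ([] : List (Fin 2)); simpa using this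
  have e3 : dw1 (List.replicate b (1:Fin 2)) = [] := by
    have := dw1_rep1 b ([] : List (Fin 2)); simpa using this
  simp [prs, t0, t1, h1, h2, e1, e2, e3]

lemma quad_self_mem (m n : ℕ) : quad m m n n ∈ CL * CL := by
  rw [Language.mem_mul]
  exact ⟨List.replicate m 0 ++ List.replicate m 1, ⟨m, rfl⟩,
    List.replicate n 0 ++ List.replicate n 1, ⟨n, rfl⟩, by simp [quad, List.append_assoc]⟩

lemma quad_mem {N e1 e2 e3 e4 : ℕ} (hN : 1 ≤ N)
    (h : quad (N+e1) (N+e2) (N+e3) (N+e4) ∈ CL * CL) : e1 = e2 ∧ e3 = e4 := by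
  rw [Language.mem_mul] at h
  obtain ⟨u, hu, v, hv, huv⟩ := h
  obtain ⟨m, rfl⟩ := hu
  obtain ⟨n, rfl⟩ := hv
  have hq : quad (N+e1) (N+e2) (N+e3) (N+e4) = quad m m n n := by
    rw [← huv]; simp [quad, List.append_assoc]
  have hL : prs (quad (N+e1) (N+e2) (N+e3) (N+e4)) = (N+e1, N+e2, N+e3, N+e4, []) :=
    prs_quad (by omega) (by omega)
  rcases Nat.eq_zero_or_pos m with rfl | hm
  · have : quad 0 0 n n = List.replicate n (0:Fin 2) ++ List.replicate n 1 := by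
      simp [quad]
    rw [hq, this, prs_pair] at hL
    have := congrArg (fun p => p.2.2.1) hL
    simp at this
    omega
  rcases Nat.eq_zero_or_pos n with rfl | hn
  · have : quad m m 0 0 = List.replicate m (0:Fin 2) ++ List.replicate m 1 := by
      simp [quad]
    rw [hq, this, prs_pair] at hL
    have := congrArg (fun p => p.2.2.1) hL
    simp at this
    omega
  · rw [hq, prs_quad hm hn] at hL
    have h1 := congrArg (fun p => p.1) hL
    have h2 := congrArg (fun p => p.2.1) hL
    have h3 := congrArg (fun p => p.2.2.1) hL
    have h4 := congrArg (fun p => p.2.2.2.1) hL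
    simp at h1 h2 h3 h4
    omega

/-! #### machine-side generic lemmas -/

variable {M : ZkAut (Fin 2) 1}

/-- bound on edge weights -/
def BB (M : ZkAut (Fin 2) 1) : ℤ := (M.edges.map (fun e => |e.2.1.2 0|)).sum

lemma BB_nonneg : 0 ≤ BB M := by
  apply List.sum_nonneg
  intro x hx
  simp only [List.mem_map] at hx
  obtain ⟨e, _, rfl⟩ := hx
  exact abs_nonneg _

lemma edge_wt_le {e : Edge M} (he : e ∈ M.edges) : |e.2.1.2 0| ≤ BB M := by
  apply List.single_le_sum (l := M.edges.map (fun e => |e.2.1.2 0|))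
  · intro x hx
    simp only [List.mem_map] at hx
    obtain ⟨e', _, rfl⟩ := hx
    exact abs_nonneg _
  · exact List.mem_map_of_mem he

lemma wt_bound : ∀ (T : List (Edge M)) (p : Fin M.n), Ok p T → |wt T| ≤ BB M * T.length := by
  intro T
  induction T with
  | nil => intro p _; simp
  | cons e T ih =>
    rintro p ⟨he, _, hok⟩
    have h1 := edge_wt_le he
    have h2 := ih e.2.2 hok
    have h3 := abs_add_le (e.2.1.2 0) (wt T)
    simp only [wt_cons, List.length_cons]
    push_cast
    nlinarith [abs_nonneg (wt T)]

lemma lenwd (T : List (Edge M)) : (wd T).length ≤ T.length := by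
  induction T with
  | nil => simp
  | cons e T ih =>
    simp only [wd_cons, List.length_append, List.length_cons]
    cases e.2.1.1 <;> simp [Option.toList] <;> omega

lemma split_wd : ∀ (T : List (Edge M)) (u v : List (Fin 2)), wd T = u ++ v →
    ∃ T1 T2, T = T1 ++ T2 ∧ wd T1 = u ∧ wd T2 = v := by
  intro T
  induction T with
  | nil =>
    intro u v h
    simp only [wd_nil] at h
    have h' := h.symm
    rw [List.append_eq_nil_iff] at h'
    exact ⟨[], [], rfl, by simp [h'.1], by simp [h'.2]⟩
  | cons e T ih =>
    intro u v h
    rw [wd_cons] at h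
    cases u with
    | nil =>
      refine ⟨[], e :: T, rfl, rfl, ?_⟩
      rw [wd_cons, h]
      simp
    | cons c u' =>
      rcases he : e.2.1.1 with _ | d
      · rw [he] at h
        simp only [Option.toList, List.nil_append] at h
        obtain ⟨T1, T2, rfl, hw1, hw2⟩ := ih (c :: u') v h
        exact ⟨e :: T1, T2, rfl, by simp [hw1, he], hw2⟩
      · rw [he] at h
        simp only [Option.toList, List.singleton_append, List.cons.injEq, List.cons_append] at h
        obtain ⟨rfl, h2⟩ := h
        obtain ⟨T1, T2, rfl, hw1, hw2⟩ := ih u' v h2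
        exact ⟨e :: T1, T2, rfl, by simp [hw1, he], hw2⟩

lemma sub_rep {x : Fin 2} {u : List (Fin 2)} {k : ℕ} (h : ∀ b ∈ u, b ∈ List.replicate k x) :
    u = List.replicate u.length x :=
  List.eq_replicate_length.2 (fun b hb => List.eq_of_mem_replicate (h b hb))

lemma cancel_rep {x : Fin 2} {i N : ℕ} (h : i ≤ N) {X Y : List (Fin 2)}
    (e : List.replicate i x ++ X = List.replicate N x ++ Y) :
    X = List.replicate (N - i) x ++ Y := by
  have hN : List.replicate N x = List.replicate i x ++ List.replicate (N - i) x := by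
    rw [← List.replicate_add]; congr 1; omega
  rw [hN, List.append_assoc] at e
  exact List.append_cancel_left e

/-- iterate a cycle -/
def itr : ℕ → List (Edge M) → List (Edge M)
  | 0, _ => []
  | t + 1, C => C ++ itr t C

lemma itr_ok {v : Fin M.n} {C : List (Edge M)} (hok : Ok v C) (hend : endSt v C = v) (t : ℕ) :
    Ok v (itr t C) ∧ endSt v (itr t C) = v ∧ wt (itr t C) = t * wt C ∧
      ∀ l x, wd C = List.replicate l x → wd (itr t C) = List.replicate (t * l) x := by
  induction t with
  | zero => exact ⟨trivial, rfl, by simp [itr], fun l x _ => by simp [itr]⟩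
  | succ m ih =>
    obtain ⟨h1, h2, h3, h4⟩ := ih
    refine ⟨by simp [itr, hok, hend, h1], by simp [itr, hend, h2], by
      simp [itr, h3]; push_cast; ring, ?_⟩
    intro l x hC
    simp only [itr, wd_append, hC, h4 l x hC, ← List.replicate_add]
    congr 1
    ring

/-- global size parameter -/
def NN (M : ZkAut (Fin 2) 1) : ℕ := M.n ^ 2 * (BB M).toNat + 2 * M.n + 2

/-- the letter of the `γ`-th block -/
def ltr : ℕ → Fin 2
  | 0 => 0
  | 1 => 1
  | 2 => 0
  | _ => 1

/-- prefix of the big word up to position `i` in block `γ` -/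
def pfx (M : ZkAut (Fin 2) 1) : ℕ → ℕ → List (Fin 2)
  | 0, i => List.replicate i 0
  | 1, i => List.replicate (NN M) 0 ++ List.replicate i 1
  | 2, i => List.replicate (NN M) 0 ++ List.replicate (NN M) 1 ++ List.replicate i 0
  | _, i => List.replicate (NN M) 0 ++ List.replicate (NN M) 1 ++ List.replicate (NN M) 0 ++
      List.replicate i 1

lemma pfx_len (M : ZkAut (Fin 2) 1) (γ : ℕ) (hγ : γ ≤ 3) (i : ℕ) :
    (pfx M γ i).length = γ * NN M + i := by
  interval_cases γ <;> simp [pfx] <;> ring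

lemma pfx_zero_app (M : ZkAut (Fin 2) 1) (γ : ℕ) (hγ : γ ≤ 3) (i : ℕ) :
    pfx M γ 0 ++ List.replicate i (ltr γ) = pfx M γ i := by
  interval_cases γ <;> simp [pfx, ltr]

/-! #### setup and sites -/

lemma rep_merge (x : Fin 2) (a b : ℕ) (l : List (Fin 2)) :
    List.replicate a x ++ (List.replicate b x ++ l) = List.replicate (a + b) x ++ l := by
  rw [← List.append_assoc, ← List.replicate_add]

structure Setup (M : ZkAut (Fin 2) 1) : Type where
  f : Fin M.n
  hf : M.accept f
  T0 : List (Edge M)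
  ok : Ok M.start T0
  hend : endSt M.start T0 = f
  hwd : wd T0 = quad (NN M) (NN M) (NN M) (NN M)
  hwt : wt T0 = 0

structure Site {M : ZkAut (Fin 2) 1} (St : Setup M) : Type where
  γ : ℕ
  hγ : γ ≤ 3
  v : Fin M.n
  Ta : List (Edge M)
  Tb : List (Edge M)
  Cy : List (Edge M)
  i : ℕ
  l : ℕ
  hsplit : Ta ++ Tb = St.T0
  okTa : Ok M.start Ta
  endTa : endSt M.start Ta = v
  hi : i ≤ NN M
  wdTa : wd Ta = pfx M γ i
  okCy : Ok v Cy
  endCy : endSt v Cy = v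
  wdCy : wd Cy = List.replicate l (ltr γ)

lemma site_tb {St : Setup M} (X : Site St) :
    Ok X.v X.Tb ∧ endSt X.v X.Tb = St.f ∧ wt X.Ta + wt X.Tb = 0 ∧
      pfx M X.γ X.i ++ wd X.Tb = quad (NN M) (NN M) (NN M) (NN M) := by
  have h := St.ok
  rw [← X.hsplit, Ok_append] at h
  have he : endSt M.start (X.Ta ++ X.Tb) = St.f := by rw [X.hsplit]; exact St.hend
  rw [endSt_append, X.endTa] at he
  have hw : wt X.Ta + wt X.Tb = 0 := by
    have := St.hwt; rw [← X.hsplit, wt_append] at this; exact this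
  have hq : pfx M X.γ X.i ++ wd X.Tb = quad (NN M) (NN M) (NN M) (NN M) := by
    have := St.hwd; rw [← X.hsplit, wd_append, X.wdTa] at this; exact this
  rw [X.endTa] at h
  exact ⟨h.2, he, hw, hq⟩

/-- the central pumping construction: insert `t` copies of the `X` cycle and
`t'` copies of the `Y` cycle. -/
lemma pump {St : Setup M} (hM : ∀ w : List (Fin 2), w ∈ CL * CL ↔ M.Accepts w)
    (X Y : Site St) (hlen : (wd X.Ta).length < (wd Y.Ta).length) (t t' : ℕ)
    (hzero : (t : ℤ) * wt X.Cy + (t' : ℤ) * wt Y.Cy = 0) :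
    ∃ Dw Tw : List (Fin 2), pfx M X.γ X.i ++ Dw = pfx M Y.γ Y.i ∧
      pfx M Y.γ Y.i ++ Tw = quad (NN M) (NN M) (NN M) (NN M) ∧
      (pfx M X.γ X.i ++ (List.replicate (t * X.l) (ltr X.γ) ++
        (Dw ++ (List.replicate (t' * Y.l) (ltr Y.γ) ++ Tw)))) ∈ CL * CL := by
  obtain ⟨okTbX, endTbX, wtX, hqX⟩ := site_tb X
  obtain ⟨okTbY, endTbY, wtY, hqY⟩ := site_tb Y
  -- order the two split points
  have hsame : X.Ta ++ X.Tb = Y.Ta ++ Y.Tb := by rw [X.hsplit, Y.hsplit]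
  have horder : ∃ D, Y.Ta = X.Ta ++ D := by
    rcases List.append_eq_append_iff.1 hsame with ⟨a', ha, _⟩ | ⟨c', hc, _⟩
    · exact ⟨a', ha⟩
    · exfalso
      have : wd X.Ta = wd Y.Ta ++ wd c' := by rw [hc, wd_append]
      have := congrArg List.length this
      simp only [List.length_append] at this
      omega
  obtain ⟨D, hD⟩ := horder
  have okD : Ok X.v D := by
    have := Y.okTa; rw [hD, Ok_append, X.endTa] at this; exact this.2
  have endD : endSt X.v D = Y.v := by
    have := Y.endTa; rw [hD, endSt_append, X.endTa] at this; exact this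
  have wtD : wt X.Ta + wt D = wt Y.Ta := by rw [hD, wt_append]
  obtain ⟨okI1, endI1, wtI1, wdI1⟩ := itr_ok X.okCy X.endCy t
  obtain ⟨okI2, endI2, wtI2, wdI2⟩ := itr_ok Y.okCy Y.endCy t'
  set T' := X.Ta ++ (itr t X.Cy ++ (D ++ (itr t' Y.Cy ++ Y.Tb))) with hT'
  have okT' : Ok M.start T' := by
    rw [hT']
    simp only [Ok_append, endSt_append, X.endTa, endI1, endD, endI2]
    exact ⟨X.okTa, okI1, okD, okI2, okTbY⟩
  have endT' : endSt M.start T' = St.f := by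
    rw [hT']
    simp only [endSt_append, X.endTa, endI1, endD, endI2]
    exact endTbY
  have wtT' : wt T' = 0 := by
    rw [hT']
    simp only [wt_append, wtI1, wtI2]
    linarith [wtD, wtY]
  have wdT' : wd T' = pfx M X.γ X.i ++ (List.replicate (t * X.l) (ltr X.γ) ++
      (wd D ++ (List.replicate (t' * Y.l) (ltr Y.γ) ++ wd Y.Tb))) := by
    rw [hT']
    simp only [wd_append, X.wdTa, wdI1 X.l (ltr X.γ) X.wdCy, wdI2 Y.l (ltr Y.γ) Y.wdCy]
  refine ⟨wd D, wd Y.Tb, ?_, hqY, ?_⟩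
  · have := Y.wdTa; rw [hD, wd_append, X.wdTa] at this; exact this
  · rw [hM]
    rw [accepts_iff_tr]
    exact ⟨St.f, T', St.hf, okT', endT', wdT', wtT'⟩

lemma NN_pos : 1 ≤ NN M := by unfold NN; omega

/-! #### the four word-shape computations -/

section Shapes

variable (M)

lemma shape02 {iX iY p q : ℕ} (hiX : iX ≤ NN M) (hiY : iY ≤ NN M) {Dw Tw : List (Fin 2)}
    (hD : pfx M 0 iX ++ Dw = pfx M 2 iY)
    (hT : pfx M 2 iY ++ Tw = quad (NN M) (NN M) (NN M) (NN M)) :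
    pfx M 0 iX ++ (List.replicate p (ltr 0) ++ (Dw ++ (List.replicate q (ltr 2) ++ Tw))) =
      quad (NN M + p) (NN M) (NN M + q) (NN M) := by
  set N := NN M
  have hD' : List.replicate iX (0:Fin 2) ++ Dw =
      List.replicate N 0 ++ (List.replicate N 1 ++ List.replicate iY 0) := by
    simpa [pfx, List.append_assoc] using hD
  have hDw : Dw = List.replicate (N - iX) 0 ++ (List.replicate N 1 ++ List.replicate iY 0) :=
    cancel_rep hiX hD' 
  have hTw : Tw = List.replicate (N - iY) 0 ++ List.replicate N 1 := by
    have h' : List.replicate iY (0:Fin 2) ++ Tw =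
        List.replicate N 0 ++ List.replicate N 1 := by
      have := hT
      simp only [pfx, quad, List.append_assoc] at this
      exact List.append_cancel_left (List.append_cancel_left this)
    have := cancel_rep hiY h'
    exact this
  subst hDw hTw
  simp only [pfx, quad, ltr, List.append_assoc, rep_merge, List.append_nil]
  have e1 : iX + (p + (N - iX)) = N + p := by omega
  have e2 : iY + (q + (N - iY)) = N + q := by omega
  rw [e1, e2]

lemma shape03 {iX iY p q : ℕ} (hiX : iX ≤ NN M) (hiY : iY ≤ NN M) {Dw Tw : List (Fin 2)}
    (hD : pfx M 0 iX ++ Dw = pfx M 3 iY)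
    (hT : pfx M 3 iY ++ Tw = quad (NN M) (NN M) (NN M) (NN M)) :
    pfx M 0 iX ++ (List.replicate p (ltr 0) ++ (Dw ++ (List.replicate q (ltr 3) ++ Tw))) =
      quad (NN M + p) (NN M) (NN M) (NN M + q) := by
  set N := NN M
  have hD' : List.replicate iX (0:Fin 2) ++ Dw =
      List.replicate N 0 ++ (List.replicate N 1 ++ (List.replicate N 0 ++
        List.replicate iY 1)) := by
    simpa [pfx, List.append_assoc] using hD
  have hDw := cancel_rep hiX hD'
  have hT' : List.replicate iY (1:Fin 2) ++ Tw = List.replicate N 1 := by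
    have := hT
    simp only [pfx, quad, List.append_assoc] at this
    exact List.append_cancel_left (List.append_cancel_left (List.append_cancel_left this))
  have hTw : Tw = List.replicate (N - iY) 1 := by
    have := cancel_rep hiY (x := (1 : Fin 2)) (Y := ([] : List (Fin 2))) (by simpa using hT')
    simpa using this
  subst hDw hTw
  simp only [pfx, quad, ltr, List.append_assoc, rep_merge, List.append_nil]
  have e1 : iX + (p + (N - iX)) = N + p := by omega
  have e2 : iY + (q + (N - iY)) = N + q := by omega
  rw [← List.replicate_add]
  have e2' : iY + q + (N - iY) = N + q := by omega
  rw [e1, e2']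

lemma shape12 {iX iY p q : ℕ} (hiX : iX ≤ NN M) (hiY : iY ≤ NN M) {Dw Tw : List (Fin 2)}
    (hD : pfx M 1 iX ++ Dw = pfx M 2 iY)
    (hT : pfx M 2 iY ++ Tw = quad (NN M) (NN M) (NN M) (NN M)) :
    pfx M 1 iX ++ (List.replicate p (ltr 1) ++ (Dw ++ (List.replicate q (ltr 2) ++ Tw))) =
      quad (NN M) (NN M + p) (NN M + q) (NN M) := by
  set N := NN M
  have hD' : List.replicate iX (1:Fin 2) ++ Dw =
      List.replicate N 1 ++ List.replicate iY 0 := by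
    have := hD
    simp only [pfx, List.append_assoc] at this
    exact List.append_cancel_left this
  have hDw := cancel_rep hiX hD'
  have hT' : List.replicate iY (0:Fin 2) ++ Tw =
      List.replicate N 0 ++ List.replicate N 1 := by
    have := hT
    simp only [pfx, quad, List.append_assoc] at this
    exact List.append_cancel_left (List.append_cancel_left this)
  have hTw := cancel_rep hiY hT'
  subst hDw hTw
  simp only [pfx, quad, ltr, List.append_assoc, rep_merge, List.append_nil]
  have e1 : iX + (p + (N - iX)) = N + p := by omega
  have e2 : iY + (q + (N - iY)) = N + q := by omega
  rw [e1, e2]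

lemma shape13 {iX iY p q : ℕ} (hiX : iX ≤ NN M) (hiY : iY ≤ NN M) {Dw Tw : List (Fin 2)}
    (hD : pfx M 1 iX ++ Dw = pfx M 3 iY)
    (hT : pfx M 3 iY ++ Tw = quad (NN M) (NN M) (NN M) (NN M)) :
    pfx M 1 iX ++ (List.replicate p (ltr 1) ++ (Dw ++ (List.replicate q (ltr 3) ++ Tw))) =
      quad (NN M) (NN M + p) (NN M) (NN M + q) := by
  set N := NN M
  have hD' : List.replicate iX (1:Fin 2) ++ Dw =
      List.replicate N 1 ++ (List.replicate N 0 ++ List.replicate iY 1) := by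
    have := hD
    simp only [pfx, List.append_assoc] at this
    exact List.append_cancel_left this
  have hDw := cancel_rep hiX hD'
  have hT' : List.replicate iY (1:Fin 2) ++ Tw = List.replicate N 1 := by
    have := hT
    simp only [pfx, quad, List.append_assoc] at this
    exact List.append_cancel_left (List.append_cancel_left (List.append_cancel_left this))
  have hTw : Tw = List.replicate (N - iY) 1 := by
    have := cancel_rep hiY (x := (1 : Fin 2)) (Y := ([] : List (Fin 2))) (by simpa using hT')
    simpa using this
  subst hDw hTw
  simp only [pfx, quad, ltr, List.append_assoc, rep_merge, List.append_nil]
  have e1 : iX + (p + (N - iX)) = N + p := by omega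
  have e2 : iY + (q + (N - iY)) = N + q := by omega
  rw [← List.replicate_add]
  have e2' : iY + q + (N - iY) = N + q := by omega
  rw [e1, e2']

end Shapes

/-! #### contradiction lemmas from pumping -/

lemma signpair {c c' : ℤ} (h : c * c' < 0) :
    ∃ t t' : ℕ, 1 ≤ t ∧ 1 ≤ t' ∧ (t : ℤ) * c + (t' : ℤ) * c' = 0 := by
  refine ⟨c'.natAbs, c.natAbs, ?_, ?_, ?_⟩
  · have : c' ≠ 0 := by rintro rfl; simp at h
    have := Int.natAbs_pos.2 this
    omega
  · have : c ≠ 0 := by rintro rfl; simp at h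
    have := Int.natAbs_pos.2 this
    omega
  · rcases mul_neg_iff.1 h with ⟨hc, hc'⟩ | ⟨hc, hc'⟩
    · rw [Int.natAbs_of_nonneg (le_of_lt hc), Int.ofNat_natAbs_of_nonpos (le_of_lt hc')]
      ring
    · rw [Int.ofNat_natAbs_of_nonpos (le_of_lt hc), Int.natAbs_of_nonneg (le_of_lt hc')]
      ring

variable {St : Setup M}

lemma contra02 (hM : ∀ w : List (Fin 2), w ∈ CL * CL ↔ M.Accepts w)
    (X Y : Site St) (hX : X.γ = 0) (hY : Y.γ = 2)
    (hlen : (wd X.Ta).length < (wd Y.Ta).length) (t t' : ℕ)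
    (hzero : (t : ℤ) * wt X.Cy + (t' : ℤ) * wt Y.Cy = 0) :
    t * X.l = 0 ∧ t' * Y.l = 0 := by
  obtain ⟨Dw, Tw, hD, hT, hmem⟩ := pump hM X Y hlen t t' hzero
  rw [hX] at hD hmem
  rw [hY] at hD hT hmem
  rw [shape02 M X.hi Y.hi hD hT] at hmem
  have := quad_mem (e1 := t * X.l) (e2 := 0) (e3 := t' * Y.l) (e4 := 0) NN_pos
    (by simpa using hmem)
  omega

lemma contra03 (hM : ∀ w : List (Fin 2), w ∈ CL * CL ↔ M.Accepts w)
    (X Y : Site St) (hX : X.γ = 0) (hY : Y.γ = 3)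
    (hlen : (wd X.Ta).length < (wd Y.Ta).length) (t t' : ℕ)
    (hzero : (t : ℤ) * wt X.Cy + (t' : ℤ) * wt Y.Cy = 0) :
    t * X.l = 0 ∧ t' * Y.l = 0 := by
  obtain ⟨Dw, Tw, hD, hT, hmem⟩ := pump hM X Y hlen t t' hzero
  rw [hX] at hD hmem
  rw [hY] at hD hT hmem
  rw [shape03 M X.hi Y.hi hD hT] at hmem
  have := quad_mem (e1 := t * X.l) (e2 := 0) (e3 := 0) (e4 := t' * Y.l) NN_pos
    (by simpa using hmem)
  omega

lemma contra12 (hM : ∀ w : List (Fin 2), w ∈ CL * CL ↔ M.Accepts w)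
    (X Y : Site St) (hX : X.γ = 1) (hY : Y.γ = 2)
    (hlen : (wd X.Ta).length < (wd Y.Ta).length) (t t' : ℕ)
    (hzero : (t : ℤ) * wt X.Cy + (t' : ℤ) * wt Y.Cy = 0) :
    t * X.l = 0 ∧ t' * Y.l = 0 := by
  obtain ⟨Dw, Tw, hD, hT, hmem⟩ := pump hM X Y hlen t t' hzero
  rw [hX] at hD hmem
  rw [hY] at hD hT hmem
  rw [shape12 M X.hi Y.hi hD hT] at hmem
  have := quad_mem (e1 := 0) (e2 := t * X.l) (e3 := t' * Y.l) (e4 := 0) NN_pos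
    (by simpa using hmem)
  omega

lemma contra13 (hM : ∀ w : List (Fin 2), w ∈ CL * CL ↔ M.Accepts w)
    (X Y : Site St) (hX : X.γ = 1) (hY : Y.γ = 3)
    (hlen : (wd X.Ta).length < (wd Y.Ta).length) (t t' : ℕ)
    (hzero : (t : ℤ) * wt X.Cy + (t' : ℤ) * wt Y.Cy = 0) :
    t * X.l = 0 ∧ t' * Y.l = 0 := by
  obtain ⟨Dw, Tw, hD, hT, hmem⟩ := pump hM X Y hlen t t' hzero
  rw [hX] at hD hmem
  rw [hY] at hD hT hmem
  rw [shape13 M X.hi Y.hi hD hT] at hmem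
  have := quad_mem (e1 := 0) (e2 := t * X.l) (e3 := 0) (e4 := t' * Y.l) NN_pos
    (by simpa using hmem)
  omega

/-! #### extraction of a designated cycle in each block -/

def GoodAt (St : Setup M) (γ : ℕ) (v : Fin M.n) : Prop :=
  ∃ Ta Tb i, Ta ++ Tb = St.T0 ∧ Ok M.start Ta ∧ endSt M.start Ta = v ∧
    i ≤ NN M ∧ wd Ta = pfx M γ i

lemma nn_big : M.n + 2 ≤ NN M := by unfold NN; omega

lemma extract (γ : ℕ) (hγ : γ ≤ 3) (Pre Sb Post : List (Edge M))
    (hT0 : Pre ++ (Sb ++ Post) = St.T0) (hwdPre : wd Pre = pfx M γ 0)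
    (hwdSb : wd Sb = List.replicate (NN M) (ltr γ)) :
    ∃ Z : Site St, Z.γ = γ ∧ 1 ≤ Z.l ∧ Z.i ≤ M.n + 1 := by
  have okT0 := St.ok
  rw [← hT0, Ok_append] at okT0
  obtain ⟨okPre, okRest⟩ := okT0
  rw [Ok_append] at okRest
  obtain ⟨okSb, _⟩ := okRest
  set r := endSt M.start Pre with hr
  have H : ∀ j : Fin (M.n + 2), ∃ U, ∃ V, Sb = U ++ V ∧
      wd U = List.replicate (j : ℕ) (ltr γ) := by
    intro j
    have hj : (j : ℕ) ≤ NN M := le_trans (by omega) (nn_big (M := M))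
    have : wd Sb = List.replicate (j : ℕ) (ltr γ) ++
        List.replicate (NN M - (j : ℕ)) (ltr γ) := by
      rw [hwdSb, ← List.replicate_add]
      congr 1
      omega
    obtain ⟨T1, T2, h1, h2, _⟩ := split_wd Sb _ _ this
    exact ⟨T1, T2, h1, h2⟩
  choose U V hUV hwdU using H
  have hcol := Fintype.exists_ne_map_eq_of_card_lt
    (fun j : Fin (M.n + 2) => endSt r (U j)) (by simp)
  obtain ⟨j, j', hne, heq⟩ := hcol
  have main : ∀ a b : Fin (M.n + 2), (a : ℕ) < (b : ℕ) →
      endSt r (U a) = endSt r (U b) →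
      ∃ Z : Site St, Z.γ = γ ∧ 1 ≤ Z.l ∧ Z.i ≤ M.n + 1 := by
    intro a b hab hgeq
    have hUU : U a ++ V a = U b ++ V b := by rw [← hUV a, ← hUV b]
    have horder : ∃ D, U b = U a ++ D := by
      rcases List.append_eq_append_iff.1 hUU with ⟨a', ha, _⟩ | ⟨c', hc, _⟩
      · exact ⟨a', ha⟩
      · exfalso
        have : wd (U a) = wd (U b) ++ wd c' := by rw [hc, wd_append]
        have hlen := congrArg List.length this
        rw [hwdU a, hwdU b] at hlen
        simp only [List.length_append, List.length_replicate] at hlen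
        omega
    obtain ⟨D, hD⟩ := horder
    have hSb : Sb = U a ++ (D ++ V b) := by rw [← List.append_assoc, ← hD, ← hUV b]
    have okUa : Ok r (U a) := by
      have := okSb; rw [hSb, Ok_append] at this; exact this.1
    have okD : Ok (endSt r (U a)) D := by
      have := okSb; rw [hSb, Ok_append, Ok_append] at this; exact this.2.1
    have endD : endSt (endSt r (U a)) D = endSt r (U a) := by
      conv_rhs => rw [hgeq]
      rw [hD, endSt_append]
    have hwdD : wd D = List.replicate ((b : ℕ) - (a : ℕ)) (ltr γ) := by
      have : wd (U a) ++ wd D = List.replicate (b : ℕ) (ltr γ) ++ [] := by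
        rw [← wd_append, ← hD, hwdU b, List.append_nil]
      rw [hwdU a] at this
      have := cancel_rep (le_of_lt hab) this
      simpa using this
    have hsplit : (Pre ++ U a) ++ (D ++ (V b ++ Post)) = St.T0 := by
      rw [← hT0, hSb]
      simp [List.append_assoc]
    have hokTa : Ok M.start (Pre ++ U a) := by
      rw [Ok_append]
      exact ⟨okPre, okUa⟩
    have hendTa : endSt M.start (Pre ++ U a) = endSt r (U a) := by
      rw [endSt_append]
    have hia : (a : ℕ) ≤ NN M := le_trans (by omega) (nn_big (M := M))
    have hwdTa : wd (Pre ++ U a) = pfx M γ (a : ℕ) := by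
      rw [wd_append, hwdPre, hwdU a, pfx_zero_app M γ hγ]
    have hl : 1 ≤ (b : ℕ) - (a : ℕ) := by omega
    have hile : (a : ℕ) ≤ M.n + 1 := by have := a.isLt; omega
    exact ⟨⟨γ, hγ, endSt r (U a), Pre ++ U a, D ++ (V b ++ Post), D, (a : ℕ),
      (b : ℕ) - (a : ℕ), hsplit, hokTa, hendTa, hia, hwdTa, okD, endD, hwdD⟩, rfl, hl, hile⟩
  rcases lt_or_gt_of_ne hne with h | h
  · exact main j j' h heq
  · exact main j' j h heq.symm

/-! #### sign of cycles at good states -/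

lemma cyc_sign (hM : ∀ w : List (Fin 2), w ∈ CL * CL ↔ M.Accepts w)
    (σ : ℤ) (hσ : σ = 1 ∨ σ = -1)
    (Z1 Z4 : Site St) (h1γ : Z1.γ = 0) (h4γ : Z4.γ = 3)
    (h1l : 1 ≤ Z1.l) (h4l : 1 ≤ Z4.l) (h1i : Z1.i ≤ M.n + 1)
    (hs1 : 1 ≤ σ * wt Z1.Cy) (hs4 : 1 ≤ σ * wt Z4.Cy)
    (γ : ℕ) (hγ : γ ≤ 3) (v : Fin M.n) (Cy : List (Edge M)) (l : ℕ)
    (hg : GoodAt St γ v) (okCy : Ok v Cy) (endCy : endSt v Cy = v)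
    (wdCy : wd Cy = List.replicate l (ltr γ)) :
    (l = 0 → 0 ≤ σ * wt Cy) ∧ (1 ≤ l → 1 ≤ σ * wt Cy) := by
  obtain ⟨Ta, Tb, i, hsp, hok, hend, hi, hwdTa⟩ := hg
  set W : Site St := ⟨γ, hγ, v, Ta, Tb, Cy, i, l, hsp, hok, hend, hi, hwdTa,
    okCy, endCy, wdCy⟩ with hW
  have hN1 : 1 ≤ NN M := NN_pos
  have hN2 : M.n + 2 ≤ NN M := nn_big
  have len1 : (wd Z1.Ta).length = 0 * NN M + Z1.i := by
    rw [Z1.wdTa, h1γ]; exact pfx_len M 0 (by norm_num) Z1.i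
  have len4 : (wd Z4.Ta).length = 3 * NN M + Z4.i := by
    rw [Z4.wdTa, h4γ]; exact pfx_len M 3 (by norm_num) Z4.i
  have lenW : (wd W.Ta).length = γ * NN M + i := by
    show (wd Ta).length = _
    rw [hwdTa]; exact pfx_len M γ hγ i
  have sq : σ * σ = 1 := by rcases hσ with rfl | rfl <;> norm_num
  have keyneg : σ * wt Cy < 0 → False := by
    intro hneg
    have hprod1 : wt Z1.Cy * wt Cy < 0 := by nlinarith
    have hprod4 : wt Cy * wt Z4.Cy < 0 := by nlinarith
    rcases (show γ = 0 ∨ γ = 1 ∨ γ = 2 ∨ γ = 3 by omega) with rfl | rfl | rfl | rfl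
    · obtain ⟨t, t', ht, ht', heq⟩ := signpair hprod4
      have hres := contra03 hM W Z4 rfl h4γ (by omega) t t' heq
      have := Nat.mul_pos ht' h4l
      omega
    · obtain ⟨t, t', ht, ht', heq⟩ := signpair hprod4
      have hres := contra13 hM W Z4 rfl h4γ (by omega) t t' heq
      have := Nat.mul_pos ht' h4l
      omega
    · obtain ⟨t, t', ht, ht', heq⟩ := signpair hprod1
      have hres := contra02 hM Z1 W h1γ rfl (by omega) t t' heq
      have := Nat.mul_pos ht h1l
      omega
    · obtain ⟨t, t', ht, ht', heq⟩ := signpair hprod1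
      have hres := contra03 hM Z1 W h1γ rfl (by omega) t t' heq
      have := Nat.mul_pos ht h1l
      omega
  have keyzero : wt Cy = 0 → 1 ≤ l → False := by
    intro h0 hl
    have hWl : W.l = l := rfl
    rcases (show γ = 0 ∨ γ = 1 ∨ γ = 2 ∨ γ = 3 by omega) with rfl | rfl | rfl | rfl
    · have hres := contra03 hM W Z4 rfl h4γ (by omega) 1 0 (by simp [show wt W.Cy = 0 from h0])
      omega
    · have hres := contra13 hM W Z4 rfl h4γ (by omega) 1 0 (by simp [show wt W.Cy = 0 from h0])
      omega
    · have hres := contra02 hM Z1 W h1γ rfl (by omega) 0 1 (by simp [show wt W.Cy = 0 from h0])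
      omega
    · have hres := contra03 hM Z1 W h1γ rfl (by omega) 0 1 (by simp [show wt W.Cy = 0 from h0])
      omega
  constructor
  · intro _
    by_contra hcon
    push_neg at hcon
    exact keyneg hcon
  · intro hl
    rcases lt_trichotomy (σ * wt Cy) 0 with h | h | h
    · exact absurd h (fun hh => keyneg hh)
    · exfalso
      apply keyzero ?_ hl
      rcases hσ with rfl | rfl
      · linarith
      · linarith
    · omega

/-! #### the weight lower-bound (loop-erasure) lemma -/

lemma erasure (σ : ℤ) (hσ : σ = 1 ∨ σ = -1) (γ : ℕ)
    (Hcyc : ∀ (v : Fin M.n) (Cy : List (Edge M)) (l : ℕ), GoodAt St γ v → Ok v Cy →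
      endSt v Cy = v → wd Cy = List.replicate l (ltr γ) →
      (l = 0 → 0 ≤ σ * wt Cy) ∧ (1 ≤ l → 1 ≤ σ * wt Cy)) :
    ∀ (L : ℕ) (R : List (Edge M)) (p : Fin M.n) (k : ℕ), R.length ≤ L → Ok p R →
      wd R = List.replicate k (ltr γ) →
      (∀ U V, R = U ++ V → GoodAt St γ (endSt p U)) →
      (k : ℤ) ≤ (M.n : ℤ) * (σ * wt R) + ((M.n : ℤ) ^ 2 * BB M + M.n) := by
  intro L
  induction L with
  | zero =>
    intro R p k hL hOk hwd hGood
    have hR : R = [] := List.length_eq_zero_iff.1 (Nat.le_zero.1 hL)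
    subst hR
    have hk : k = 0 := by
      have := congrArg List.length hwd
      simpa using this.symm
    subst hk
    have := BB_nonneg (M := M)
    simp only [wt_nil, mul_zero, Nat.cast_zero]
    positivity
  | succ L ih =>
    intro R p k hL hOk hwd hGood
    by_cases hsmall : R.length ≤ M.n
    · -- short trace: direct bound
      have hk : k ≤ M.n := by
        have h1 := lenwd R
        have h2 := congrArg List.length hwd
        simp only [List.length_replicate] at h2
        omega
      have hb := wt_bound R p hOk
      have habs : |σ * wt R| = |wt R| := by
        rcases hσ with rfl | rfl <;> simp
      have hRlen : (R.length : ℤ) ≤ (M.n : ℤ) := by exact_mod_cast hsmall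
      have hBB := BB_nonneg (M := M)
      have h3 : |wt R| ≤ BB M * M.n := le_trans hb (by nlinarith)
      have h4 : -(BB M * M.n) ≤ σ * wt R := by
        have := abs_le.1 (habs ▸ h3)
        linarith [this.1]
      have hk' : (k : ℤ) ≤ (M.n : ℤ) := by exact_mod_cast hk
      have hn0 : (0 : ℤ) ≤ (M.n : ℤ) := by positivity
      nlinarith
    · push_neg at hsmall
      suffices main : ∀ a b : Fin (M.n + 1), (a : ℕ) < (b : ℕ) →
          endSt p (R.take (a : ℕ)) = endSt p (R.take (b : ℕ)) →
          (k : ℤ) ≤ (M.n : ℤ) * (σ * wt R) + ((M.n : ℤ) ^ 2 * BB M + M.n) by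
        obtain ⟨a, b, hne, heq⟩ := Fintype.exists_ne_map_eq_of_card_lt
          (fun j : Fin (M.n + 1) => endSt p (R.take (j : ℕ))) (by simp)
        rcases lt_or_gt_of_ne hne with h | h
        · exact main a b h heq
        · exact main b a h heq.symm
      intro a b hab hst
      set U := R.take (a : ℕ) with hU
      set C := (R.take (b : ℕ)).drop (a : ℕ) with hC
      set Vv := R.drop (b : ℕ) with hVv
      have hble : (b : ℕ) ≤ R.length := by have := b.isLt; omega
      have hUC : R.take (b : ℕ) = U ++ C := by
        conv_lhs => rw [← List.take_append_drop (a : ℕ) (R.take (b : ℕ))]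
        rw [List.take_take, min_eq_left (le_of_lt hab)]
      have hR : R = U ++ (C ++ Vv) := by
        conv_lhs => rw [← List.take_append_drop (b : ℕ) R]
        rw [hUC, List.append_assoc]
      have hlenC : C.length = (b : ℕ) - (a : ℕ) := by
        rw [hC]
        simp only [List.length_drop, List.length_take]
        rw [min_eq_left hble]
      have oks := hOk
      rw [hR, Ok_append, Ok_append] at oks
      obtain ⟨okU, okC, okV⟩ := oks
      have endC : endSt (endSt p U) C = endSt p U := by
        have : endSt p (U ++ C) = endSt p (R.take (b : ℕ)) := by rw [hUC]
        rw [endSt_append] at this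
        rw [this, ← hst]
      -- the three words are replicates
      have hmem : ∀ x : Fin 2, x ∈ wd R → x = ltr γ := by
        intro x hx
        rw [hwd] at hx
        exact List.eq_of_mem_replicate hx
      have hwdU : wd U = List.replicate (wd U).length (ltr γ) := by
        apply sub_rep (k := k)
        intro x hx
        rw [← hwd, hR]
        simp only [wd_append, List.mem_append]
        tauto
      have hwdC : wd C = List.replicate (wd C).length (ltr γ) := by
        apply sub_rep (k := k)
        intro x hx
        rw [← hwd, hR]
        simp only [wd_append, List.mem_append]
        tauto
      have hwdV : wd Vv = List.replicate (wd Vv).length (ltr γ) := by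
        apply sub_rep (k := k)
        intro x hx
        rw [← hwd, hR]
        simp only [wd_append, List.mem_append]
        tauto
      set lU := (wd U).length
      set lC := (wd C).length
      set lV := (wd Vv).length
      have hsum : lU + lC + lV = k := by
        have := congrArg List.length hwd
        rw [hR] at this
        simp only [wd_append, List.length_append, List.length_replicate] at this
        omega
      have hlCle : lC ≤ M.n := by
        have h1 := lenwd C
        have := b.isLt
        omega
      have hgood : GoodAt St γ (endSt p U) := hGood U (C ++ Vv) hR
      have hsign := Hcyc (endSt p U) C lC hgood okC endC hwdC
      have hlCbound : (lC : ℤ) ≤ (M.n : ℤ) * (σ * wt C) := by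
        rcases Nat.eq_zero_or_pos lC with h0 | hpos
        · rw [h0]
          have := hsign.1 h0
          have hn0 : (0 : ℤ) ≤ (M.n : ℤ) := by positivity
          simp only [Nat.cast_zero]
          exact mul_nonneg hn0 this
        · have h1 := hsign.2 hpos
          have hlC' : (lC : ℤ) ≤ (M.n : ℤ) := by exact_mod_cast hlCle
          nlinarith
      -- recurse on the shorter trace
      have hClen1 : 1 ≤ C.length := by omega
      have hlenR' : (U ++ Vv).length ≤ L := by
        have h1 : R.length = U.length + (C.length + Vv.length) := by
          rw [hR]; simp
        simp only [List.length_append]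
        omega
      have okR' : Ok p (U ++ Vv) := by
        rw [Ok_append]
        rw [endC] at okV
        exact ⟨okU, okV⟩
      have wdR' : wd (U ++ Vv) = List.replicate (lU + lV) (ltr γ) := by
        rw [wd_append, hwdU, hwdV, List.replicate_add]
      have goodR' : ∀ U2 V2, U ++ Vv = U2 ++ V2 → GoodAt St γ (endSt p U2) := by
        intro U2 V2 h2
        rcases List.append_eq_append_iff.1 h2 with ⟨a', ha, hv⟩ | ⟨c', hc, _⟩
        · -- U2 = U ++ a'
          have hR2 : R = (U ++ (C ++ a')) ++ V2 := by
            rw [hR, hv]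
            simp [List.append_assoc]
          have := hGood (U ++ (C ++ a')) V2 hR2
          have hend2 : endSt p (U ++ (C ++ a')) = endSt p U2 := by
            rw [ha]
            simp only [endSt_append, endC]
          rwa [hend2] at this
        · -- U = U2 ++ c'
          have hR2 : R = U2 ++ (c' ++ (C ++ Vv)) := by
            rw [hR, hc]
            simp [List.append_assoc]
          exact hGood U2 _ hR2
      have hIH := ih (U ++ Vv) p (lU + lV) hlenR' okR' wdR' goodR'
      have hwtR : σ * wt R = σ * wt (U ++ Vv) + σ * wt C := by
        rw [hR]
        simp only [wt_append]
        ring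
      have hx : (M.n : ℤ) * (σ * wt R) =
          (M.n : ℤ) * (σ * wt (U ++ Vv)) + (M.n : ℤ) * (σ * wt C) := by
        rw [hwtR, mul_add]
      have hkk : (k : ℤ) = (lU + lV : ℕ) + (lC : ℤ) := by
        push_cast
        omega
      rw [hkk, hx]
      linarith

/-! #### final assembly -/

lemma site_len (X : Site St) : (wd X.Ta).length = X.γ * NN M + X.i := by
  rw [X.wdTa]; exact pfx_len M X.γ X.hγ X.i

lemma part2 : ¬ IsCounterLang 1 (CL * CL) := by
  rintro ⟨M, hM⟩
  have hw : quad (NN M) (NN M) (NN M) (NN M) ∈ CL * CL := quad_self_mem _ _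
  rw [hM, accepts_iff_tr] at hw
  obtain ⟨f, T0, hf, hok, hend, hwd0, hwt⟩ := hw
  set N := NN M with hN
  set St : Setup M := ⟨f, hf, T0, hok, hend, hwd0, hwt⟩ with hStdef
  have hT0eq : St.T0 = T0 := by rw [hStdef]
  -- split T0 into the four blocks
  have hsplit : wd T0 = List.replicate N 0 ++ (List.replicate N 1 ++
      (List.replicate N 0 ++ List.replicate N 1)) := by
    rw [hwd0]; simp [quad, List.append_assoc]
  obtain ⟨S1, R1, hT1, hw1, hwR1⟩ := split_wd T0 _ _ hsplit
  obtain ⟨S2, R2, hT2, hw2, hwR2⟩ := split_wd R1 _ _ hwR1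
  obtain ⟨S3, S4, hT3, hw3, hw4⟩ := split_wd R2 _ _ hwR2
  have hT0 : T0 = S1 ++ (S2 ++ (S3 ++ S4)) := by rw [hT1, hT2, hT3]
  -- traces of the blocks
  have okblocks := hok
  rw [hT0, Ok_append, Ok_append, Ok_append] at okblocks
  obtain ⟨okS1, okS2, okS3, okS4⟩ := okblocks
  set r1 := endSt M.start S1
  set r2 := endSt r1 S2
  set r3 := endSt r2 S3
  -- designated cycles
  obtain ⟨Z1, hZ1γ, hZ1l, hZ1i⟩ := extract (St := St) 0 (by norm_num) [] S1 (S2 ++ (S3 ++ S4))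
    (by rw [hT0eq, hT0]; rfl) (by simp [pfx]) (by simpa [ltr] using hw1)
  obtain ⟨Z2, hZ2γ, hZ2l, hZ2i⟩ := extract (St := St) 1 (by norm_num) S1 S2 (S3 ++ S4)
    (by rw [hT0eq, hT0]) (by simp [pfx, hw1, hN]) (by simpa [ltr] using hw2)
  obtain ⟨Z3, hZ3γ, hZ3l, hZ3i⟩ := extract (St := St) 2 (by norm_num) (S1 ++ S2) S3 S4
    (by rw [hT0eq, hT0]; simp [List.append_assoc]) (by simp [pfx, hw1, hw2, hN])
    (by simpa [ltr] using hw3)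
  obtain ⟨Z4, hZ4γ, hZ4l, hZ4i⟩ := extract (St := St) 3 (by norm_num) (S1 ++ (S2 ++ S3)) S4 []
    (by rw [hT0eq, hT0]; simp [List.append_assoc]) (by simp [pfx, hw1, hw2, hw3, hN])
    (by simpa [ltr] using hw4)
  have hN1 : 1 ≤ N := NN_pos
  have hN2 : M.n + 2 ≤ N := nn_big
  have l1 := site_len Z1; have l2 := site_len Z2
  have l3 := site_len Z3; have l4 := site_len Z4
  rw [hZ1γ] at l1; rw [hZ2γ] at l2; rw [hZ3γ] at l3; rw [hZ4γ] at l4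
  have len13 : (wd Z1.Ta).length < (wd Z3.Ta).length := by rw [l1, l3]; omega
  have len14 : (wd Z1.Ta).length < (wd Z4.Ta).length := by rw [l1, l4]; omega
  have len23 : (wd Z2.Ta).length < (wd Z3.Ta).length := by rw [l2, l3]; omega
  have len24 : (wd Z2.Ta).length < (wd Z4.Ta).length := by rw [l2, l4]; omega
  -- the designated weights are nonzero
  have hc1 : wt Z1.Cy ≠ 0 := by
    intro h0
    have hres := contra03 hM Z1 Z4 hZ1γ hZ4γ len14 1 0 (by simp [h0])
    omega
  have hc2 : wt Z2.Cy ≠ 0 := by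
    intro h0
    have hres := contra13 hM Z2 Z4 hZ2γ hZ4γ len24 1 0 (by simp [h0])
    omega
  have hc3 : wt Z3.Cy ≠ 0 := by
    intro h0
    have hres := contra02 hM Z1 Z3 hZ1γ hZ3γ len13 0 1 (by simp [h0])
    omega
  have hc4 : wt Z4.Cy ≠ 0 := by
    intro h0
    have hres := contra03 hM Z1 Z4 hZ1γ hZ4γ len14 0 1 (by simp [h0])
    omega
  -- no cross pair has opposite signs
  have h13 : ¬ (wt Z1.Cy * wt Z3.Cy < 0) := by
    intro h
    obtain ⟨t, t', ht, ht', heq⟩ := signpair h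
    have hres := contra02 hM Z1 Z3 hZ1γ hZ3γ len13 t t' heq
    have := Nat.mul_pos ht hZ1l
    omega
  have h14 : ¬ (wt Z1.Cy * wt Z4.Cy < 0) := by
    intro h
    obtain ⟨t, t', ht, ht', heq⟩ := signpair h
    have hres := contra03 hM Z1 Z4 hZ1γ hZ4γ len14 t t' heq
    have := Nat.mul_pos ht hZ1l
    omega
  have h23 : ¬ (wt Z2.Cy * wt Z3.Cy < 0) := by
    intro h
    obtain ⟨t, t', ht, ht', heq⟩ := signpair h
    have hres := contra12 hM Z2 Z3 hZ2γ hZ3γ len23 t t' heq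
    have := Nat.mul_pos ht hZ2l
    omega
  -- a uniform sign
  obtain ⟨σ, hσ, hs1, hs2, hs3, hs4⟩ : ∃ σ : ℤ, (σ = 1 ∨ σ = -1) ∧ 1 ≤ σ * wt Z1.Cy ∧
      1 ≤ σ * wt Z2.Cy ∧ 1 ≤ σ * wt Z3.Cy ∧ 1 ≤ σ * wt Z4.Cy := by
    rcases lt_trichotomy (wt Z1.Cy) 0 with h1 | h1 | h1
    · refine ⟨-1, Or.inr rfl, by linarith, ?_, ?_, ?_⟩
      · have hc3' : wt Z3.Cy < 0 := by
          by_contra hcon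
          push_neg at hcon
          have : 0 < wt Z3.Cy := lt_of_le_of_ne hcon (Ne.symm hc3)
          exact h13 (mul_neg_of_neg_of_pos h1 this)
        have hc2' : wt Z2.Cy < 0 := by
          by_contra hcon
          push_neg at hcon
          have : 0 < wt Z2.Cy := lt_of_le_of_ne hcon (Ne.symm hc2)
          exact h23 (mul_neg_of_pos_of_neg this hc3')
        linarith
      · have hc3' : wt Z3.Cy < 0 := by
          by_contra hcon
          push_neg at hcon
          have : 0 < wt Z3.Cy := lt_of_le_of_ne hcon (Ne.symm hc3)
          exact h13 (mul_neg_of_neg_of_pos h1 this)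
        linarith
      · have hc4' : wt Z4.Cy < 0 := by
          by_contra hcon
          push_neg at hcon
          have : 0 < wt Z4.Cy := lt_of_le_of_ne hcon (Ne.symm hc4)
          exact h14 (mul_neg_of_neg_of_pos h1 this)
        linarith
    · exact absurd h1 hc1
    · refine ⟨1, Or.inl rfl, by linarith, ?_, ?_, ?_⟩
      · have hc3' : 0 < wt Z3.Cy := by
          by_contra hcon
          push_neg at hcon
          have : wt Z3.Cy < 0 := lt_of_le_of_ne hcon hc3
          exact h13 (mul_neg_of_pos_of_neg h1 this)
        have hc2' : 0 < wt Z2.Cy := by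
          by_contra hcon
          push_neg at hcon
          have : wt Z2.Cy < 0 := lt_of_le_of_ne hcon hc2
          exact h23 (mul_neg_of_neg_of_pos this hc3')
        linarith
      · have hc3' : 0 < wt Z3.Cy := by
          by_contra hcon
          push_neg at hcon
          have : wt Z3.Cy < 0 := lt_of_le_of_ne hcon hc3
          exact h13 (mul_neg_of_pos_of_neg h1 this)
        linarith
      · have hc4' : 0 < wt Z4.Cy := by
          by_contra hcon
          push_neg at hcon
          have : wt Z4.Cy < 0 := lt_of_le_of_ne hcon hc4
          exact h14 (mul_neg_of_pos_of_neg h1 this)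
        linarith
  -- every good cycle obeys the sign rule
  have Hcyc : ∀ γ : ℕ, γ ≤ 3 → ∀ (v : Fin M.n) (Cy : List (Edge M)) (l : ℕ),
      GoodAt St γ v → Ok v Cy → endSt v Cy = v → wd Cy = List.replicate l (ltr γ) →
      (l = 0 → 0 ≤ σ * wt Cy) ∧ (1 ≤ l → 1 ≤ σ * wt Cy) := by
    intro γ hγ
    exact fun v Cy l => cyc_sign hM σ hσ Z1 Z4 hZ1γ hZ4γ hZ1l hZ4l hZ1i hs1 hs4 γ hγ v Cy l
  -- good splits for each block
  have good1 : ∀ U V, S1 = U ++ V → GoodAt St 0 (endSt M.start U) := by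
    intro U V hUV
    have hrepU : wd U = List.replicate (wd U).length (0 : Fin 2) := by
      apply sub_rep (k := N)
      intro x hx
      rw [← hw1, hUV, wd_append]
      exact List.mem_append_left _ hx
    have hlenU : (wd U).length ≤ N := by
      have := congrArg List.length hw1
      rw [hUV, wd_append] at this
      simp only [List.length_append, List.length_replicate] at this
      omega
    refine ⟨U, V ++ (S2 ++ (S3 ++ S4)), (wd U).length, ?_, ?_, rfl, hlenU, ?_⟩
    · rw [hT0eq, hT0, hUV]; simp [List.append_assoc]
    · have := okS1; rw [hUV, Ok_append] at this; exact this.1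
    · rw [hrepU]; simp [pfx]
  have good2 : ∀ U V, S2 = U ++ V → GoodAt St 1 (endSt r1 U) := by
    intro U V hUV
    have hrepU : wd U = List.replicate (wd U).length (1 : Fin 2) := by
      apply sub_rep (k := N)
      intro x hx
      rw [← hw2, hUV, wd_append]
      exact List.mem_append_left _ hx
    have hlenU : (wd U).length ≤ N := by
      have := congrArg List.length hw2
      rw [hUV, wd_append] at this
      simp only [List.length_append, List.length_replicate] at this
      omega
    refine ⟨S1 ++ U, V ++ (S3 ++ S4), (wd U).length, ?_, ?_, ?_, hlenU, ?_⟩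
    · rw [hT0eq, hT0, hUV]; simp [List.append_assoc]
    · rw [Ok_append]
      have := okS2; rw [hUV, Ok_append] at this
      exact ⟨okS1, this.1⟩
    · rw [endSt_append]
    · rw [wd_append, hw1, hrepU]; simp [pfx, hN]
  have good3 : ∀ U V, S3 = U ++ V → GoodAt St 2 (endSt r2 U) := by
    intro U V hUV
    have hrepU : wd U = List.replicate (wd U).length (0 : Fin 2) := by
      apply sub_rep (k := N)
      intro x hx
      rw [← hw3, hUV, wd_append]
      exact List.mem_append_left _ hx
    have hlenU : (wd U).length ≤ N := by
      have := congrArg List.length hw3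
      rw [hUV, wd_append] at this
      simp only [List.length_append, List.length_replicate] at this
      omega
    refine ⟨S1 ++ (S2 ++ U), V ++ S4, (wd U).length, ?_, ?_, ?_, hlenU, ?_⟩
    · rw [hT0eq, hT0, hUV]; simp [List.append_assoc]
    · rw [Ok_append, Ok_append]
      have := okS3; rw [hUV, Ok_append] at this
      exact ⟨okS1, okS2, this.1⟩
    · simp only [endSt_append]; rfl
    · rw [wd_append, wd_append, hw1, hw2, hrepU]; simp [pfx, List.append_assoc, hN]
  have good4 : ∀ U V, S4 = U ++ V → GoodAt St 3 (endSt r3 U) := by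
    intro U V hUV
    have hrepU : wd U = List.replicate (wd U).length (1 : Fin 2) := by
      apply sub_rep (k := N)
      intro x hx
      rw [← hw4, hUV, wd_append]
      exact List.mem_append_left _ hx
    have hlenU : (wd U).length ≤ N := by
      have := congrArg List.length hw4
      rw [hUV, wd_append] at this
      simp only [List.length_append, List.length_replicate] at this
      omega
    refine ⟨S1 ++ (S2 ++ (S3 ++ U)), V, (wd U).length, ?_, ?_, ?_, hlenU, ?_⟩
    · rw [hT0eq, hT0, hUV]; simp [List.append_assoc]
    · rw [Ok_append, Ok_append, Ok_append]
      have := okS4; rw [hUV, Ok_append] at this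
      exact ⟨okS1, okS2, okS3, this.1⟩
    · simp only [endSt_append]; rfl
    · rw [wd_append, wd_append, wd_append, hw1, hw2, hw3, hrepU]
      simp [pfx, List.append_assoc, hN]
  -- apply the erasure bound to each block
  set D : ℤ := (M.n : ℤ) ^ 2 * BB M + M.n with hD
  have e1 : (N : ℤ) ≤ (M.n : ℤ) * (σ * wt S1) + D :=
    erasure σ hσ 0 (Hcyc 0 (by norm_num)) S1.length S1 M.start N le_rfl okS1
      (by simpa [ltr] using hw1) good1
  have e2 : (N : ℤ) ≤ (M.n : ℤ) * (σ * wt S2) + D :=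
    erasure σ hσ 1 (Hcyc 1 (by norm_num)) S2.length S2 r1 N le_rfl okS2
      (by simpa [ltr] using hw2) good2
  have e3 : (N : ℤ) ≤ (M.n : ℤ) * (σ * wt S3) + D :=
    erasure σ hσ 2 (Hcyc 2 (by norm_num)) S3.length S3 r2 N le_rfl okS3
      (by simpa [ltr] using hw3) good3
  have e4 : (N : ℤ) ≤ (M.n : ℤ) * (σ * wt S4) + D :=
    erasure σ hσ 3 (Hcyc 3 (by norm_num)) S4.length S4 r3 N le_rfl okS4
      (by simpa [ltr] using hw4) good4
  -- total weight is zero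
  have hsum : wt S1 + wt S2 + wt S3 + wt S4 = 0 := by
    have := hwt
    rw [hT0] at this
    simp only [wt_append] at this
    linarith
  have hfour : (4 : ℤ) * N ≤ 4 * D := by
    have hexp : (M.n : ℤ) * (σ * wt S1) + (M.n : ℤ) * (σ * wt S2) +
        (M.n : ℤ) * (σ * wt S3) + (M.n : ℤ) * (σ * wt S4) = 0 := by
      have : (M.n : ℤ) * (σ * wt S1) + (M.n : ℤ) * (σ * wt S2) +
          (M.n : ℤ) * (σ * wt S3) + (M.n : ℤ) * (σ * wt S4) =
          (M.n : ℤ) * σ * (wt S1 + wt S2 + wt S3 + wt S4) := by ring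
      rw [this, hsum, mul_zero]
    linarith
  -- but N is much larger than D
  have hNval : (N : ℤ) = (M.n : ℤ) ^ 2 * BB M + 2 * M.n + 2 := by
    rw [hN]
    unfold NN
    push_cast
    rw [Int.toNat_of_nonneg (BB_nonneg (M := M))]
  rw [hNval, hD] at hfour
  have : (0:ℤ) ≤ (M.n : ℤ) := by positivity
  linarith

end Part2


end OCNC

/-- 1-counter languages are not closed under concatenation: over `Fin 2`
(with `0 = a`, `1 = b`), the language `C = { a^n b^n : n ∈ ℕ }` is 1-counter,
but the concatenation `C·C` is not 1-counter. -/
theorem one_counter_not_closed_under_concatenation :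
    let C : Language (Fin 2) :=
      {w | ∃ n : ℕ, w = List.replicate n 0 ++ List.replicate n 1}
    IsCounterLang 1 C ∧ ¬ IsCounterLang 1 (C * C) := by
  intro C
  exact ⟨OCNC.part1, OCNC.part2⟩
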